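/- Let S be the monoid presented by ⟨a, b | a*b*a*b = 1, b*a*b*a = 1⟩. The power semigroup P(S), consisting of all subsets of S with setwise multiplication X*Y = {x*y : x ∈ X, y ∈ Y}, is not an LEF semigroup. -/

import Mathlib

open Pointwise

namespace Stmt5

/-- A semigroup `S` is LEF if for every finite subset `H` of `S` there exist a finite
semigroup `F` and a function `f : S → F` injective on `H` such that
`f (x * y) = f x * f y` whenever `x, y, x * y ∈ H`. -/
def IsLEF (S : Type*) [Semigroup S] : Prop :=
  ∀ H : Finset S, ∃ (F : Type) (_ : Semigroup F) (_ : Fintype F) (f : S → F),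
    Set.InjOn f ↑H ∧
      ∀ x ∈ H, ∀ y ∈ H, x * y ∈ H → f (x * y) = f x * f y

/-- The generator `a` of the free monoid on two generators. -/
def a : FreeMonoid (Fin 2) := FreeMonoid.of 0

/-- The generator `b` of the free monoid on two generators. -/
def b : FreeMonoid (Fin 2) := FreeMonoid.of 1

/-- The defining relations `a * b * a * b = 1` and `b * a * b * a = 1`. -/
def rel : FreeMonoid (Fin 2) → FreeMonoid (Fin 2) → Prop :=
  fun x y => (x = a * b * a * b ∧ y = 1) ∨ (x = b * a * b * a ∧ y = 1)

/-- The monoid `S = ⟨a, b ∣ abab = 1, baba = 1⟩`. -/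
def S : Type := (conGen rel).Quotient

instance : Monoid S := Con.monoid _

def xi : ℤ → ℤ := fun z => if z = 0 then 1 else if z = 1 then 0 else z

lemma xixi (z : ℤ) : xi (xi z) = z := by
  unfold xi; split_ifs <;> omega

def fa : Function.End ℤ := fun z => z + 1
def fb : Function.End ℤ := fun z => xi z - 1

def phi : FreeMonoid (Fin 2) →* Function.End ℤ :=
  FreeMonoid.lift (fun i => if i = 0 then fa else fb)

lemma phi_a : phi a = fa := by simp [phi, a]
lemma phi_b : phi b = fb := by simp [phi, b]

lemma end_mul (f g : Function.End ℤ) (z : ℤ) : (f * g) z = f (g z) := rfl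
lemma end_one (z : ℤ) : (1 : Function.End ℤ) z = z := rfl

lemma hrelphi : ∀ x y, rel x y → (Con.ker phi) x y := by
  intro x y hxy
  rcases hxy with ⟨rfl, rfl⟩ | ⟨rfl, rfl⟩ <;>
  · rw [Con.ker_rel]
    simp only [map_mul, map_one, phi_a, phi_b]
    funext z
    simp only [end_mul, end_one, fa, fb]
    simp only [sub_add_cancel, xixi]
    try omega

def rho : S →* Function.End ℤ := Con.lift _ phi (Con.conGen_le.mpr hrelphi)
def pim : FreeMonoid (Fin 2) →* S := Con.mk' _

lemma rho_pim (w : FreeMonoid (Fin 2)) : rho (pim w) = phi w :=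
  Con.lift_mk' _ _

def sa : S := pim a
def sb : S := pim (b * a * b)
def k0 : S := pim (a * b)

lemma pim_abab : pim (a * b * a * b) = 1 := by
  have h : (conGen rel) (a * b * a * b) 1 := ConGen.Rel.of _ _ (Or.inl ⟨rfl, rfl⟩)
  have := (Con.eq _).mpr h
  exact this

lemma pim_baba : pim (b * a * b * a) = 1 := by
  have h : (conGen rel) (b * a * b * a) 1 := ConGen.Rel.of _ _ (Or.inr ⟨rfl, rfl⟩)
  have := (Con.eq _).mpr h
  exact this

lemma hss' : sa * sb = 1 := by
  have : sa * sb = pim (a * b * a * b) := by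
    rw [sa, sb, ← map_mul]
    rfl
  rw [this, pim_abab]

lemma hs's : sb * sa = 1 := by
  have : sb * sa = pim (b * a * b * a) := by
    rw [sa, sb, ← map_mul]
  rw [this, pim_baba]

lemma rho_sa (z : ℤ) : rho sa z = z + 1 := by
  rw [sa, rho_pim, phi_a]; rfl

lemma rho_sb (z : ℤ) : rho sb z = z - 1 := by
  rw [sb, rho_pim]
  simp only [map_mul, phi_a, phi_b, end_mul]
  simp only [fa, fb, sub_add_cancel, xixi]

lemma rho_k0 (z : ℤ) : rho k0 z = xi z := by
  rw [k0, rho_pim]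
  simp only [map_mul, phi_a, phi_b, end_mul]
  simp only [fa, fb, sub_add_cancel]

def Eset : Set S := {g | ∀ z : ℤ, z < 0 → rho g z = z}
def Aset : Set S := Eset * {sa} * Eset
def Bset : Set S := Eset * {sb} * Eset
def Cset : Set S := Bset * Aset

lemma one_mem_E : (1 : S) ∈ Eset := by
  intro z _
  rw [map_one]; rfl

lemma hEE : Eset * Eset = Eset := by
  ext g
  constructor
  · rintro ⟨x, hx, y, hy, rfl⟩
    intro z hz
    rw [map_mul, end_mul, hy z hz, hx z hz]
  · intro hg
    exact ⟨g, hg, 1, one_mem_E, mul_one g⟩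

lemma hEA : Eset * Aset = Aset := by
  rw [Aset, ← mul_assoc, ← mul_assoc, hEE]

lemma hAE : Aset * Eset = Aset := by
  rw [Aset, mul_assoc (Eset * {sa}), hEE]

lemma hEB : Eset * Bset = Bset := by
  rw [Bset, ← mul_assoc, ← mul_assoc, hEE]

lemma hBE : Bset * Eset = Bset := by
  rw [Bset, mul_assoc (Eset * {sb}), hEE]

lemma hAB : Aset * Bset = Eset := by
  rw [Aset, Bset]
  ext g
  constructor
  · rintro ⟨x, ⟨u, ⟨k1, hk1, s1, hs1, rfl⟩, k2, hk2, rfl⟩, y,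
      ⟨v, ⟨k3, hk3, s2, hs2, rfl⟩, k4, hk4, rfl⟩, rfl⟩
    rw [Set.mem_singleton_iff] at hs1 hs2
    subst hs1; subst hs2
    intro z hz
    have h1 : z - 1 < 0 := by omega
    simp only [map_mul, end_mul]
    rw [hk4 z hz, rho_sb, hk3 _ h1, rho_sa, hk2 _ (by omega)]
    rw [show z - 1 + 1 = z from by omega, hk1 z hz]
  · intro hg
    have hmem : (g * sa * 1) * (1 * sb * 1) ∈ Eset * {sa} * Eset * (Eset * {sb} * Eset) :=
      Set.mul_mem_mul
        (Set.mul_mem_mul (Set.mul_mem_mul hg rfl) one_mem_E)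
        (Set.mul_mem_mul (Set.mul_mem_mul one_mem_E rfl) one_mem_E)
    have heq : (g * sa * 1) * (1 * sb * 1) = g := by
      rw [mul_one, mul_one, one_mul, mul_assoc, hss', mul_one]
    rwa [heq] at hmem

lemma witness_mem_C : sb * (k0 * sa) ∈ Cset := by
  have hB : (1 : S) * sb * 1 ∈ Bset :=
    Set.mul_mem_mul (Set.mul_mem_mul one_mem_E rfl) one_mem_E
  have hk0E : k0 ∈ Eset := by
    intro z hz
    rw [rho_k0]
    unfold xi
    split_ifs <;> omega
  have hA : k0 * sa * 1 ∈ Aset :=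
    Set.mul_mem_mul (Set.mul_mem_mul hk0E rfl) one_mem_E
  have := Set.mul_mem_mul hB hA
  rw [show (1 : S) * sb * 1 * (k0 * sa * 1) = sb * (k0 * sa) from by
    rw [mul_one, one_mul, mul_one]] at this
  exact this

lemma witness_not_mem_E : sb * (k0 * sa) ∉ Eset := by
  intro h
  have := h (-1) (by omega)
  rw [map_mul, map_mul, end_mul, end_mul] at this
  rw [rho_sa] at this
  norm_num at this
  rw [rho_k0, show xi 0 = 1 from rfl, rho_sb] at this
  omega

lemma hCE : Cset ≠ Eset := by
  intro h
  exact witness_not_mem_E (h ▸ witness_mem_C)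

lemma finKey {F : Type} [Semigroup F] [Fintype F] (e α β : F)
    (hea : e * α = α) (hae : α * e = α) (heb : e * β = β)
    (hab : α * β = e) : β * α = e := by
  haveI : Finite (WithOne F) := by
    have h : Finite (Option F) := inferInstance
    exact h
  set e' : WithOne F := (e : WithOne F) with he'
  set α' : WithOne F := (α : WithOne F) with hα'
  set β' : WithOne F := (β : WithOne F) with hβ'
  have hea' : e' * α' = α' := by rw [he', hα', ← WithOne.coe_mul, hea]
  have hae' : α' * e' = α' := by rw [he', hα', ← WithOne.coe_mul, hae]
  have heb' : e' * β' = β' := by rw [he', hβ', ← WithOne.coe_mul, heb]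
  have hab' : α' * β' = e' := by rw [he', hα', hβ', ← WithOne.coe_mul, hab]
  have hn : ∀ n : ℕ, α' ^ (n + 1) * β' ^ (n + 1) = e' := by
    intro n
    induction n with
    | zero => simpa using hab'
    | succ n ih =>
      rw [pow_succ' α', pow_succ β', mul_assoc, ← mul_assoc (α' ^ (n+1)), ih,
        heb', hab']
  have hpe : ∀ n : ℕ, α' ^ (n + 1) * e' = α' ^ (n + 1) := by
    intro n
    induction n with
    | zero => simpa using hae'
    | succ n ih => rw [pow_succ, mul_assoc, hae']
  obtain ⟨i, j, hij, hval⟩ := Finite.exists_ne_map_eq_of_infinite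
    (fun n : ℕ => α' ^ (n + 1))
  wlog hlt : i < j generalizing i j
  · exact this j i hij.symm hval.symm (by omega)
  obtain ⟨q, hq⟩ : ∃ q : ℕ, j = i + (q + 1) := ⟨j - i - 1, by omega⟩

  have hpow : e' = α' ^ (q + 1) := by
    have h1 : e' = α' ^ (j + 1) * β' ^ (i + 1) := by
      rw [← hval]; exact (hn i).symm
    have h2 : α' ^ (j + 1) = α' ^ (q + 1) * α' ^ (i + 1) := by
      rw [← pow_add]; congr 1; omega
    rw [h1, h2, mul_assoc, hn i, hpe q]
  have hbeta : β' = α' ^ q * e' := by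
    calc β' = e' * β' := heb'.symm
    _ = α' ^ (q + 1) * β' := by rw [← hpow]
    _ = α' ^ q * (α' * β') := by rw [pow_succ, mul_assoc]
    _ = α' ^ q * e' := by rw [hab']
  have hfin : β' * α' = e' := by
    calc β' * α' = α' ^ q * e' * α' := by rw [hbeta]
    _ = α' ^ q * (e' * α') := by rw [mul_assoc]
    _ = α' ^ q * α' := by rw [hea']
    _ = α' ^ (q + 1) := by rw [pow_succ]
    _ = e' := hpow.symm
  have hcoe : ((β * α : F) : WithOne F) = ((e : F) : WithOne F) := by
    rw [WithOne.coe_mul, ← he', ← hα', ← hβ']; exact hfin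
  exact WithOne.coe_inj.mp hcoe

/-- The power semigroup `P(S)` of all subsets of `S` under setwise multiplication
`X * Y = {x * y : x ∈ X, y ∈ Y}` is not an LEF semigroup. -/
theorem powerSemigroup_not_isLEF : ¬ IsLEF (Set S) := by
  classical
  intro h
  obtain ⟨F, _, _, f, hinj, hmul⟩ := h ({Eset, Aset, Bset, Cset} : Finset (Set S))
  have hE : Eset ∈ ({Eset, Aset, Bset, Cset} : Finset (Set S)) := by simp
  have hA : Aset ∈ ({Eset, Aset, Bset, Cset} : Finset (Set S)) := by simp
  have hB : Bset ∈ ({Eset, Aset, Bset, Cset} : Finset (Set S)) := by simp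
  have hC : Cset ∈ ({Eset, Aset, Bset, Cset} : Finset (Set S)) := by simp
  have hea : f Eset * f Aset = f Aset := by
    have := hmul Eset hE Aset hA (by rw [hEA]; exact hA)
    rw [hEA] at this; exact this.symm
  have hae : f Aset * f Eset = f Aset := by
    have := hmul Aset hA Eset hE (by rw [hAE]; exact hA)
    rw [hAE] at this; exact this.symm
  have heb : f Eset * f Bset = f Bset := by
    have := hmul Eset hE Bset hB (by rw [hEB]; exact hB)
    rw [hEB] at this; exact this.symm
  have hab : f Aset * f Bset = f Eset := by
    have := hmul Aset hA Bset hB (by rw [hAB]; exact hE)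
    rw [hAB] at this; exact this.symm
  have hba : f Bset * f Aset = f Eset := finKey _ _ _ hea hae heb hab
  have hfc : f Cset = f Eset := by
    have := hmul Bset hB Aset hA (by rw [show Bset * Aset = Cset from rfl]; exact hC)
    rw [show Bset * Aset = Cset from rfl] at this
    rw [this, hba]
  have : Cset = Eset := hinj (by simpa using hC) (by simpa using hE) hfc
  exact hCE this


end Stmt5
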